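/- Corollary of the strengthened product uncertainty relation: for self-adjoint A, B, unit vector ψ with ΔA, ΔB > 0, and unit ψ⊥ ⟂ ψ: (1/2)|⟨ψ,[A,B]ψ⟩| ≤ ΔA·ΔB − (1/2)·|⟨ψ, (A·ΔB ± iB·ΔA)ψ⊥⟩|²/(ΔA·ΔB), with sign chosen so ±i⟨ψ,[A,B]ψ⟩ ≥ 0. -/

import Mathlib

open Complex

local notation "⟪" x ", " y "⟫" => @inner ℂ _ _ x y

/-- Standard deviation of a (self-adjoint) operator `A` in state `ψ`. -/
noncomputable def sdev {E : Type*} [NormedAddCommGroup E] [InnerProductSpace ℂ E]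
    (A : E →ₗ[ℂ] E) (ψ : E) : ℝ :=
  Real.sqrt ((⟪ψ, A (A ψ)⟫).re - ((⟪ψ, A ψ⟫).re) ^ 2)

set_option maxHeartbeats 1000000 in
/-- Corollary of the Maccone–Pati product relation:
(1/2)|⟨ψ,[A,B]ψ⟩| ≤ ΔA·ΔB − (1/2)|⟨ψ,(A·ΔB ± iB·ΔA)ψ⊥⟩|² / (ΔA·ΔB). -/
theorem maccone_pati_product_corollary
    {E : Type*} [NormedAddCommGroup E] [InnerProductSpace ℂ E]
    (A B : E →ₗ[ℂ] E)
    (hA : ∀ x y : E, ⟪A x, y⟫ = ⟪x, A y⟫)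
    (hB : ∀ x y : E, ⟪B x, y⟫ = ⟪x, B y⟫)
    (ψ ψp : E) (hψ : ‖ψ‖ = 1) (hψp : ‖ψp‖ = 1) (horth : ⟪ψ, ψp⟫ = 0)
    (hΔA : 0 < sdev A ψ) (hΔB : 0 < sdev B ψ)
    (s : ℝ) (hs : s = 1 ∨ s = -1)
    (hsign : 0 ≤ s * (Complex.I * ⟪ψ, A (B ψ) - B (A ψ)⟫).re) :
    (1 / 2) * ‖⟪ψ, A (B ψ) - B (A ψ)⟫‖ ≤
      sdev A ψ * sdev B ψ -
        (1 / 2) *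
          (‖⟪ψ, ((sdev B ψ : ℂ)) • A ψp
            + ((s : ℂ) * Complex.I) • (((sdev A ψ : ℂ)) • B ψp)⟫‖) ^ 2 /
          (sdev A ψ * sdev B ψ) := by
  set dA := sdev A ψ with hdAdef
  set dB := sdev B ψ with hdBdef
  have hψ2 : ⟪ψ, ψ⟫ = 1 := by
    rw [inner_self_eq_norm_sq_to_K, hψ]; norm_num
  -- expectation values are real
  have hAr : ⟪ψ, A ψ⟫ = (((⟪ψ, A ψ⟫).re : ℝ) : ℂ) := by
    have h1 : (starRingEnd ℂ) ⟪ψ, A ψ⟫ = ⟪ψ, A ψ⟫ := by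
      rw [inner_conj_symm]; exact hA ψ ψ
    exact (Complex.conj_eq_iff_re.mp h1).symm
  have hBr : ⟪ψ, B ψ⟫ = (((⟪ψ, B ψ⟫).re : ℝ) : ℂ) := by
    have h1 : (starRingEnd ℂ) ⟪ψ, B ψ⟫ = ⟪ψ, B ψ⟫ := by
      rw [inner_conj_symm]; exact hB ψ ψ
    exact (Complex.conj_eq_iff_re.mp h1).symm
  set c := (⟪ψ, A ψ⟫).re with hc
  set d := (⟪ψ, B ψ⟫).re with hd
  set a := A ψ - (c : ℂ) • ψ with ha
  set b := B ψ - (d : ℂ) • ψ with hb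
  have haψ : ⟪ψ, a⟫ = 0 := by
    rw [ha, inner_sub_right, inner_smul_right, hψ2, ← hAr]; ring
  have hbψ : ⟪ψ, b⟫ = 0 := by
    rw [hb, inner_sub_right, inner_smul_right, hψ2, ← hBr]; ring
  have haψ' : ⟪a, ψ⟫ = 0 := by
    rw [← inner_conj_symm, haψ, map_zero]
  have hbψ' : ⟪b, ψ⟫ = 0 := by
    rw [← inner_conj_symm, hbψ, map_zero]
  have hAψψ : ⟪A ψ, ψ⟫ = (c : ℂ) := by rw [hA ψ ψ]; exact hAr
  have hBψψ : ⟪B ψ, ψ⟫ = (d : ℂ) := by rw [hB ψ ψ]; exact hBr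
  -- standard deviations are norms of centered vectors
  have hna : ‖a‖ ^ 2 = (⟪ψ, A (A ψ)⟫).re - c ^ 2 := by
    have e1 : ⟪a, a⟫ = (((‖a‖ : ℝ) : ℂ)) ^ 2 := inner_self_eq_norm_sq_to_K a
    have e2 : ⟪a, a⟫ = ⟪ψ, A (A ψ)⟫ - (c : ℂ) ^ 2 := by
      rw [ha]
      simp only [inner_sub_left, inner_sub_right, inner_smul_left, inner_smul_right,
        hψ2, hAψψ, hAr, hA ψ (A ψ), Complex.conj_ofReal]
      ring
    have hre := congrArg Complex.re (e1.symm.trans e2)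
    simp only [← Complex.ofReal_pow, Complex.sub_re, Complex.ofReal_re] at hre
    exact hre
  have hnb : ‖b‖ ^ 2 = (⟪ψ, B (B ψ)⟫).re - d ^ 2 := by
    have e1 : ⟪b, b⟫ = (((‖b‖ : ℝ) : ℂ)) ^ 2 := inner_self_eq_norm_sq_to_K b
    have e2 : ⟪b, b⟫ = ⟪ψ, B (B ψ)⟫ - (d : ℂ) ^ 2 := by
      rw [hb]
      simp only [inner_sub_left, inner_sub_right, inner_smul_left, inner_smul_right,
        hψ2, hBψψ, hBr, hB ψ (B ψ), Complex.conj_ofReal]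
      ring
    have hre := congrArg Complex.re (e1.symm.trans e2)
    simp only [← Complex.ofReal_pow, Complex.sub_re, Complex.ofReal_re] at hre
    exact hre
  have hdA : dA = ‖a‖ := by
    rw [hdAdef, sdev, ← hc, ← hna, Real.sqrt_sq (norm_nonneg a)]
  have hdB : dB = ‖b‖ := by
    rw [hdBdef, sdev, ← hd, ← hnb, Real.sqrt_sq (norm_nonneg b)]
  set z := ⟪a, b⟫ with hz
  -- commutator expectation
  have hcomm : ⟪ψ, A (B ψ) - B (A ψ)⟫ = z - (starRingEnd ℂ) z := by
    have h1 : ⟪ψ, A (B ψ)⟫ = ⟪A ψ, B ψ⟫ := (hA ψ (B ψ)).symm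
    have h2 : ⟪ψ, B (A ψ)⟫ = ⟪B ψ, A ψ⟫ := (hB ψ (A ψ)).symm
    have hab : ⟪A ψ, B ψ⟫ = z + (c : ℂ) * d := by
      have e1 : A ψ = a + (c : ℂ) • ψ := by rw [ha]; abel
      have e2 : B ψ = b + (d : ℂ) • ψ := by rw [hb]; abel
      rw [e1, e2]
      simp only [inner_add_left, inner_add_right, inner_smul_left, inner_smul_right,
        hψ2, haψ', hbψ, haψ, Complex.conj_ofReal, ← hz]
      ring
    have hba : ⟪B ψ, A ψ⟫ = (starRingEnd ℂ) z + (c : ℂ) * d := by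
      have h3 : ⟪B ψ, A ψ⟫ = (starRingEnd ℂ) ⟪A ψ, B ψ⟫ := by
        rw [inner_conj_symm]
      rw [h3, hab]
      simp only [map_add, map_mul, Complex.conj_ofReal]
    rw [inner_sub_right, h1, h2, hab, hba]
    ring
  have hcommval : ⟪ψ, A (B ψ) - B (A ψ)⟫ = ((2 * z.im : ℝ) : ℂ) * Complex.I := by
    rw [hcomm, Complex.sub_conj]
  -- translate hsign
  have hsign' : s * z.im ≤ 0 := by
    rw [hcommval] at hsign
    have heq : (Complex.I * (((2 * z.im : ℝ) : ℂ) * Complex.I)).re = -(2 * z.im) := by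
      simp [Complex.ext_iff]
    rw [heq] at hsign
    nlinarith
  have habs : |z.im| = |s * z.im| := by
    rcases hs with h | h <;> simp [h, abs_mul]
  have hsim : s * z.im = -|z.im| := by
    rw [habs, abs_of_nonpos hsign']; ring
  -- the witness vector
  set w := (dB : ℂ) • a - ((s : ℂ) * Complex.I) • ((dA : ℂ) • b) with hw
  have hwip : ⟪ψ, ((dB : ℂ)) • A ψp + ((s : ℂ) * Complex.I) • (((dA : ℂ)) • B ψp)⟫
      = ⟪w, ψp⟫ := by
    have hAψp : ⟪ψ, A ψp⟫ = ⟪a, ψp⟫ := by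
      rw [ha, inner_sub_left, inner_smul_left, horth, ← hA ψ ψp]
      ring
    have hBψp : ⟪ψ, B ψp⟫ = ⟪b, ψp⟫ := by
      rw [hb, inner_sub_left, inner_smul_left, horth, ← hB ψ ψp]
      ring
    rw [hw]
    simp only [inner_add_right, inner_sub_left, inner_smul_right, inner_smul_left,
      hAψp, hBψp, Complex.conj_ofReal, map_mul, Complex.conj_I]
    ring
  -- norm of w
  have hnw : ‖w‖ ^ 2 = 2 * dA ^ 2 * dB ^ 2 - 2 * (dA * dB) * |z.im| := by
    have e1 : ⟪w, w⟫ = ((‖w‖ ^ 2 : ℝ) : ℂ) := by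
      push_cast
      exact inner_self_eq_norm_sq_to_K w
    have haa : ⟪a, a⟫ = ((‖a‖ ^ 2 : ℝ) : ℂ) := by
      push_cast
      exact inner_self_eq_norm_sq_to_K a
    have hbb : ⟪b, b⟫ = ((‖b‖ ^ 2 : ℝ) : ℂ) := by
      push_cast
      exact inner_self_eq_norm_sq_to_K b
    have hza : ⟪b, a⟫ = (starRingEnd ℂ) z := by rw [hz, inner_conj_symm]
    have hss : (s : ℂ) * (s : ℂ) = 1 := by
      rcases hs with h | h <;> subst h <;> norm_num
    have hssI : ((s : ℂ) * -Complex.I) * ((s : ℂ) * Complex.I) = 1 := by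
      rw [show ((s:ℂ) * -Complex.I) * ((s:ℂ) * Complex.I)
        = (s:ℂ) * (s:ℂ) * (-(Complex.I * Complex.I)) by ring, Complex.I_mul_I, hss]
      ring
    have e2 : ⟪w, w⟫ = (dB : ℂ) ^ 2 * ⟪a, a⟫ + (dA : ℂ) ^ 2 * ⟪b, b⟫
        + ((dA * dB : ℝ) : ℂ) * ((s : ℂ) * Complex.I * (starRingEnd ℂ) z
            - (s : ℂ) * Complex.I * z) := by
      rw [hw]
      simp only [inner_sub_left, inner_sub_right, inner_smul_left, inner_smul_right,
        ← hz, hza, Complex.conj_ofReal, map_mul, Complex.conj_I]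
      push_cast
      linear_combination ((dA : ℂ) ^ 2 * (⟪b, b⟫ : ℂ)) * hssI
    have e3 : (s : ℂ) * Complex.I * (starRingEnd ℂ) z - (s : ℂ) * Complex.I * z
        = ((2 * (s * z.im) : ℝ) : ℂ) := by
      have h5 : z - (starRingEnd ℂ) z = ((2 * z.im : ℝ) : ℂ) * Complex.I := Complex.sub_conj z
      calc (s : ℂ) * Complex.I * (starRingEnd ℂ) z - (s : ℂ) * Complex.I * z
          = -((s : ℂ) * Complex.I * (z - (starRingEnd ℂ) z)) := by ring
        _ = -((s : ℂ) * Complex.I * (((2 * z.im : ℝ) : ℂ) * Complex.I)) := by rw [h5]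
        _ = ((2 * (s * z.im) : ℝ) : ℂ) := by
            rw [show (s:ℂ) * Complex.I * (((2 * z.im : ℝ) : ℂ) * Complex.I)
              = (s:ℂ) * ((2 * z.im : ℝ) : ℂ) * (Complex.I * Complex.I) by ring,
              Complex.I_mul_I]
            push_cast
            ring
    rw [e3, haa, hbb] at e2
    have key : ‖w‖ ^ 2 = dB ^ 2 * ‖a‖ ^ 2 + dA ^ 2 * ‖b‖ ^ 2 + dA * dB * (2 * (s * z.im)) := by
      have h9 := e1.symm.trans e2
      exact_mod_cast h9
    rw [key, ← hdA, ← hdB, hsim]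
    ring
  -- Cauchy–Schwarz
  have hcs : ‖⟪w, ψp⟫‖ ≤ ‖w‖ := by
    have h6 := norm_inner_le_norm (𝕜 := ℂ) w ψp
    rw [hψp, mul_one] at h6
    exact h6
  have hT2 : (‖⟪w, ψp⟫‖) ^ 2 ≤ 2 * dA ^ 2 * dB ^ 2 - 2 * (dA * dB) * |z.im| := by
    rw [← hnw]
    have h0 : (0:ℝ) ≤ ‖⟪w, ψp⟫‖ := norm_nonneg _
    nlinarith
  have hlhs : (1 / 2 : ℝ) * ‖⟪ψ, A (B ψ) - B (A ψ)⟫‖ = |z.im| := by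
    rw [hcommval, norm_mul, Complex.norm_I, Complex.norm_real, Real.norm_eq_abs, mul_one, abs_mul]
    rw [show |(2:ℝ)| = 2 by norm_num]
    ring
  rw [hwip, hlhs]
  have hpos : (0:ℝ) < dA * dB := mul_pos hΔA hΔB
  have key : (1 / 2 : ℝ) * (‖⟪w, ψp⟫‖) ^ 2 / (dA * dB) ≤ dA * dB - |z.im| := by
    rw [div_le_iff₀ hpos]
    nlinarith [hT2]
  linarith [key]
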